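/- If the dihedral group D_{2N} of order 2N admits a 1-rotational 4-factorization of the complete graph on D_{2N} ∪ {∞}, then N ≡ 2 (mod 4). -/

import Mathlib

open SimpleGraph

/-- The image of a graph on `G ∪ {∞}` under right multiplication by `g` (with `∞ g = ∞`). -/
def shiftG {G : Type*} [Group G] (F : SimpleGraph (Option G)) (g : G) :
    SimpleGraph (Option G) :=
  F.map (Equiv.optionCongr (Equiv.mulRight g)).toEmbedding

/-- The `G`-stabilizer of a graph on `G ∪ {∞}`. -/
def stabG {G : Type*} [Group G] (F : SimpleGraph (Option G)) : Set G :=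
  {g | shiftG F g = F}

/-- A `k`-factor: a spanning `k`-regular subgraph of the complete graph. -/
def IsKFactor {V : Type*} (k : ℕ) (F : SimpleGraph V) : Prop :=
  ∀ v : V, (F.neighborSet v).ncard = k

/-- A `k`-factorization: a set of `k`-factors whose edges partition the complete graph. -/
def IsKFactorization {V : Type*} (k : ℕ) (𝓕 : Set (SimpleGraph V)) : Prop :=
  (∀ F ∈ 𝓕, IsKFactor k F) ∧
  ∀ u v : V, u ≠ v → ∃! F, F ∈ 𝓕 ∧ F.Adj u v

/-- A family of graphs on `G ∪ {∞}` is `1`-rotational if it is closed under the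
right multiplication action of `G`. -/
def IsRotational {G : Type*} [Group G] (𝓕 : Set (SimpleGraph (Option G))) : Prop :=
  ∀ F ∈ 𝓕, ∀ g : G, shiftG F g ∈ 𝓕

section Aux
variable {G : Type*} [Group G]

lemma shiftG_adj (F : SimpleGraph (Option G)) (g : G) (a b : Option G) :
    (shiftG F g).Adj (Option.map (· * g) a) (Option.map (· * g) b) ↔ F.Adj a b := by
  have h : ∀ c : Option G,
      (Equiv.optionCongr (Equiv.mulRight g)).toEmbedding c = Option.map (· * g) c := by
    rintro (_ | c) <;> rfl
  rw [shiftG, ← h, ← h, SimpleGraph.map_adj_apply]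

lemma shiftG_mul (F : SimpleGraph (Option G)) (g h : G) :
    shiftG (shiftG F g) h = shiftG F (g * h) := by
  unfold shiftG
  rw [SimpleGraph.map_map]
  congr 1
  ext c
  cases c <;> simp [mul_assoc]

lemma shiftG_one (F : SimpleGraph (Option G)) : shiftG F 1 = F := by
  ext a b
  have h := shiftG_adj F 1 a b
  have ha : Option.map (· * (1:G)) a = a := by cases a <;> simp
  have hb : Option.map (· * (1:G)) b = b := by cases b <;> simp
  rw [ha, hb] at h
  exact h

lemma shiftG_adj_inf (F : SimpleGraph (Option G)) (g a : G)
    (h : F.Adj none (some a)) : (shiftG F g).Adj none (some (a * g)) := by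
  simpa using (shiftG_adj F g none (some a)).2 h

lemma shiftG_adj_some (F : SimpleGraph (Option G)) (g x y : G)
    (h : F.Adj (some x) (some y)) : (shiftG F g).Adj (some (x * g)) (some (y * g)) := by
  simpa using (shiftG_adj F g (some x) (some y)).2 h

lemma ncard_T (F : SimpleGraph (Option G)) (h : (F.neighborSet none).ncard = 4) :
    ({x : G | F.Adj none (some x)}).ncard = 4 := by
  have he : F.neighborSet none = some '' {x : G | F.Adj none (some x)} := by
    ext v
    cases v with
    | none => simp [SimpleGraph.irrefl]
    | some x => simp [SimpleGraph.mem_neighborSet]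
  rw [he, Set.ncard_image_of_injective _ (Option.some_injective _)] at h
  exact h

variable {𝓕 : Set (SimpleGraph (Option G))}

lemma four_dvd_card [Fintype G] (hfac : IsKFactorization 4 𝓕) : 4 ∣ Fintype.card G := by
  classical
  have hex : ∀ x : G, ∃! F, F ∈ 𝓕 ∧ F.Adj none (some x) :=
    fun x => hfac.2 none (some x) (by simp)
  set φ : G → SimpleGraph (Option G) := fun x => (hex x).choose with hφdef
  have hφ1 : ∀ x, φ x ∈ 𝓕 ∧ (φ x).Adj none (some x) := fun x => (hex x).choose_spec.1
  have hφ2 : ∀ (x : G) (F : SimpleGraph (Option G)),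
      F ∈ 𝓕 ∧ F.Adj none (some x) → F = φ x := fun x F h => (hex x).choose_spec.2 F h
  have hcard : (Finset.univ : Finset G).card =
      ∑ F ∈ Finset.univ.image φ, (Finset.univ.filter (fun x => φ x = F)).card :=
    Finset.card_eq_sum_card_fiberwise (fun x _ => Finset.mem_image_of_mem φ (Finset.mem_univ x))
  have hfib : ∀ F ∈ Finset.univ.image φ,
      (Finset.univ.filter (fun x => φ x = F)).card = 4 := by
    intro F hFim
    obtain ⟨x₀, -, rfl⟩ := Finset.mem_image.1 hFim
    have hFmem : φ x₀ ∈ 𝓕 := (hφ1 x₀).1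
    have hflt : Finset.univ.filter (fun x => φ x = φ x₀) =
        Finset.univ.filter (fun x => (φ x₀).Adj none (some x)) := by
      ext y
      simp only [Finset.mem_filter, Finset.mem_univ, true_and]
      constructor
      · intro h; rw [← h]; exact (hφ1 y).2
      · intro h; exact (hφ2 y (φ x₀) ⟨hFmem, h⟩).symm
    rw [hflt]
    have h4 := ncard_T (φ x₀) (hfac.1 _ hFmem none)
    rw [← Set.ncard_coe_finset]
    convert h4 using 2
    ext y; simp
  rw [Finset.sum_congr rfl hfib, Finset.sum_const, smul_eq_mul] at hcard
  exact ⟨_, by rw [← Finset.card_univ, hcard, mul_comm]⟩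

variable (hfac : IsKFactorization 4 𝓕) (hrot : IsRotational 𝓕)

include hfac in
lemma exists_inf_nbr {F : SimpleGraph (Option G)} (hF : F ∈ 𝓕) :
    ∃ a : G, F.Adj none (some a) := by
  have h4 := ncard_T F (hfac.1 F hF none)
  have hne : ({x : G | F.Adj none (some x)}).Nonempty :=
    Set.nonempty_of_ncard_ne_zero (by rw [h4]; norm_num)
  exact hne

include hfac hrot in
lemma trans_shift {F F' : SimpleGraph (Option G)} (hF : F ∈ 𝓕) (hF' : F' ∈ 𝓕) :
    ∃ g : G, shiftG F g = F' := by
  obtain ⟨a, ha⟩ := exists_inf_nbr hfac hF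
  obtain ⟨b, hb⟩ := exists_inf_nbr hfac hF'
  refine ⟨a⁻¹ * b, ?_⟩
  have hadj : (shiftG F (a⁻¹ * b)).Adj none (some b) := by
    simpa [mul_inv_cancel_left] using shiftG_adj_inf F (a⁻¹ * b) a ha
  have hu := hfac.2 none (some b) (by simp)
  exact hu.unique ⟨hrot F hF _, hadj⟩ ⟨hF', hb⟩

include hfac hrot in
lemma exists_stab_factor {t : G} (ht2 : t * t = 1) (ht1 : t ≠ 1) :
    ∃ F ∈ 𝓕, shiftG F t = F := by
  obtain ⟨F, ⟨hF, hadj⟩, -⟩ := hfac.2 (some 1) (some t) (by simpa using (Ne.symm ht1))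
  refine ⟨F, hF, ?_⟩
  have h2 : (shiftG F t).Adj (some (1 * t)) (some (t * t)) := shiftG_adj_some F t 1 t hadj
  rw [one_mul, ht2] at h2
  have hu := hfac.2 (some 1) (some t) (by simpa using (Ne.symm ht1))
  exact hu.unique ⟨hrot F hF t, h2.symm⟩ ⟨hF, hadj⟩

include hfac hrot in
lemma conj_mem_stab {t : G} (ht2 : t * t = 1) (ht1 : t ≠ 1)
    {F₀ : SimpleGraph (Option G)} (hF₀ : F₀ ∈ 𝓕) :
    ∃ g : G, shiftG F₀ (g⁻¹ * t * g) = F₀ := by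
  obtain ⟨F, hF, hsF⟩ := exists_stab_factor hfac hrot ht2 ht1
  obtain ⟨g, hg⟩ := trans_shift hfac hrot hF hF₀
  refine ⟨g, ?_⟩
  calc shiftG F₀ (g⁻¹ * t * g) = shiftG (shiftG F g) (g⁻¹ * t * g) := by rw [hg]
    _ = shiftG F (g * (g⁻¹ * t * g)) := shiftG_mul F g _
    _ = shiftG F (t * g) := by group
    _ = shiftG (shiftG F t) g := (shiftG_mul F t g).symm
    _ = F₀ := by rw [hsF, hg]

end Aux

open DihedralGroup in
lemma conj_sr_parity {N : ℕ} (hdvd : 2 ∣ N) (g : DihedralGroup N) (j : ZMod N) :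
    ∃ m : ZMod N, g⁻¹ * sr j * g = sr m ∧
      ZMod.castHom hdvd (ZMod 2) m = ZMod.castHom hdvd (ZMod 2) j := by
  have hadd : ∀ x : ZMod 2, x + x = 0 := by decide
  have hneg : ∀ x : ZMod 2, -x = x := by decide
  cases g with
  | r i =>
    refine ⟨j + i + i, ?_, ?_⟩
    · have h1 : (r i)⁻¹ = r (-i) := rfl
      rw [h1, r_mul_sr, sr_mul_r]
      congr 1; ring
    · simp only [map_add]
      rw [add_assoc, hadd, add_zero]
  | sr i =>
    refine ⟨i + i - j, ?_, ?_⟩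
    · have h1 : (sr i)⁻¹ = sr i := rfl
      rw [h1, sr_mul_sr, r_mul_sr]
      congr 1; ring
    · simp only [map_sub, map_add]
      rw [hadd, zero_sub, hneg]

theorem stmt6 (N : ℕ) (hN : 0 < N)
    (𝓕 : Set (SimpleGraph (Option (DihedralGroup N))))
    (hfac : IsKFactorization 4 𝓕) (hrot : IsRotational 𝓕) :
    N % 4 = 2 := by
  haveI : NeZero N := ⟨hN.ne'⟩
  have hdvd4 : 4 ∣ 2 * N := by
    have h := four_dvd_card hfac
    rwa [DihedralGroup.card] at h
  have h2 : 2 ∣ N := by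
    obtain ⟨k, hk⟩ := hdvd4; omega
  rcases (by omega : N % 4 = 0 ∨ N % 4 = 2) with h0 | h2'
  · exfalso
    have hdvdN : 4 ∣ N := Nat.dvd_of_mod_eq_zero h0
    have hN4 : 4 ≤ N := Nat.le_of_dvd hN hdvdN
    set c : ZMod N := ((N / 2 : ℕ) : ZMod N) with hc
    set z : DihedralGroup N := DihedralGroup.r c with hzdef
    have hcc : c + c = 0 := by
      rw [hc, ← Nat.cast_add]
      have hh : N / 2 + N / 2 = N := by omega
      rw [hh, ZMod.natCast_self]
    have hz2 : z * z = 1 := by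
      rw [hzdef, DihedralGroup.r_mul_r, hcc, DihedralGroup.one_def]
    have hcne : c ≠ 0 := by
      rw [hc]
      intro h
      rw [ZMod.natCast_eq_zero_iff] at h
      have := Nat.le_of_dvd (by omega) h
      omega
    have hz1 : z ≠ 1 := by
      rw [hzdef, DihedralGroup.one_def]
      intro h; injection h with h'; exact hcne h'
    obtain ⟨F₀, hF₀, hzS⟩ := exists_stab_factor hfac hrot hz2 hz1
    have hsr1 : ∀ j : ZMod N, DihedralGroup.sr j ≠ 1 := by
      intro j h
      rw [DihedralGroup.one_def] at h
      exact (by (intro h'; cases h') : DihedralGroup.sr j ≠ DihedralGroup.r 0) h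
    obtain ⟨g₀, hg₀⟩ :=
      conj_mem_stab hfac hrot (DihedralGroup.sr_mul_self 0) (hsr1 0) hF₀
    obtain ⟨m₀, hm₀, hp₀⟩ := conj_sr_parity h2 g₀ 0
    rw [hm₀] at hg₀
    obtain ⟨g₁, hg₁⟩ :=
      conj_mem_stab hfac hrot (DihedralGroup.sr_mul_self 1) (hsr1 1) hF₀
    obtain ⟨m₁, hm₁, hp₁⟩ := conj_sr_parity h2 g₁ 1
    rw [hm₁] at hg₁
    set ε := ZMod.castHom h2 (ZMod 2) with hεdef
    have hε0 : ε m₀ = 0 := by rw [hp₀, map_zero]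
    have hε1 : ε m₁ = 1 := by rw [hp₁, map_one]
    have hεc : ε c = 0 := by
      rw [hc, map_natCast, ZMod.natCast_eq_zero_iff]
      omega
    have hεd : ε (m₁ - m₀) = 1 := by rw [map_sub, hε0, hε1, sub_zero]
    have hd0 : m₁ - m₀ ≠ 0 := by
      intro h; rw [h, map_zero] at hεd; exact one_ne_zero hεd.symm
    have hdc : m₁ - m₀ ≠ c := by
      intro h; rw [h, hεc] at hεd; exact one_ne_zero hεd.symm
    have hm01 : m₀ ≠ m₁ := by
      intro h; rw [h, hε1] at hε0; exact one_ne_zero hε0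
    set S : Set (DihedralGroup N) := {g | shiftG F₀ g = F₀} with hS
    have h1S : (1 : DihedralGroup N) ∈ S := shiftG_one F₀
    have hzSm : z ∈ S := hzS
    have hf0 : DihedralGroup.sr m₀ ∈ S := hg₀
    have hf1 : DihedralGroup.sr m₁ ∈ S := hg₁
    have hffS : DihedralGroup.r (m₁ - m₀) ∈ S := by
      have hmm : shiftG F₀ (DihedralGroup.sr m₀ * DihedralGroup.sr m₁) = F₀ := by
        rw [← shiftG_mul, hg₀, hg₁]
      rwa [DihedralGroup.sr_mul_sr] at hmm
    -- |S| ≤ 4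
    obtain ⟨a, ha⟩ := exists_inf_nbr hfac hF₀
    have hTcard := ncard_T F₀ (hfac.1 F₀ hF₀ none)
    have hsub : (fun s => a * s) '' S ⊆ {x | F₀.Adj none (some x)} := by
      rintro _ ⟨s, hs, rfl⟩
      have hs' : shiftG F₀ s = F₀ := hs
      have hadj := shiftG_adj_inf F₀ s a ha
      rwa [hs'] at hadj
    have hSle : S.ncard ≤ 4 := by
      have hinj : ((fun s => a * s) '' S).ncard = S.ncard :=
        Set.ncard_image_of_injective _ (mul_right_injective a)
      have hle : ((fun s => a * s) '' S).ncard ≤ 4 := by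
        rw [← hTcard]
        exact Set.ncard_le_ncard hsub (Set.toFinite _)
      omega
    -- 5 distinct elements of S
    classical
    have e1z : (1 : DihedralGroup N) ≠ z := Ne.symm hz1
    have e1f0 : (1 : DihedralGroup N) ≠ DihedralGroup.sr m₀ := Ne.symm (hsr1 m₀)
    have e1f1 : (1 : DihedralGroup N) ≠ DihedralGroup.sr m₁ := Ne.symm (hsr1 m₁)
    have e1rr : (1 : DihedralGroup N) ≠ DihedralGroup.r (m₁ - m₀) := by
      rw [DihedralGroup.one_def]
      intro h; injection h with h'; exact hd0 h'.symm
    have ezf0 : z ≠ DihedralGroup.sr m₀ := by rw [hzdef]; simp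
    have ezf1 : z ≠ DihedralGroup.sr m₁ := by rw [hzdef]; simp
    have ezrr : z ≠ DihedralGroup.r (m₁ - m₀) := by
      rw [hzdef]
      intro h; injection h with h'; exact hdc h'.symm
    have ef01 : DihedralGroup.sr m₀ ≠ DihedralGroup.sr m₁ := by
      intro h; injection h with h'; exact hm01 h'
    have ef0rr : DihedralGroup.sr m₀ ≠ DihedralGroup.r (m₁ - m₀) := by simp
    have ef1rr : DihedralGroup.sr m₁ ≠ DihedralGroup.r (m₁ - m₀) := by simp
    set A : Finset (DihedralGroup N) :=
      {1, z, DihedralGroup.sr m₀, DihedralGroup.sr m₁, DihedralGroup.r (m₁ - m₀)} with hA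
    have hAsub : ↑A ⊆ S := by
      intro x hx
      simp only [hA, Finset.coe_insert, Set.mem_insert_iff, Finset.coe_singleton,
        Set.mem_singleton_iff] at hx
      rcases hx with rfl | rfl | rfl | rfl | rfl
      exacts [h1S, hzSm, hf0, hf1, hffS]
    have hAcard : A.card = 5 := by
      rw [hA]
      rw [Finset.card_insert_of_notMem (by simp [e1z, e1f0, e1f1, e1rr]),
        Finset.card_insert_of_notMem (by simp [ezf0, ezf1, ezrr]),
        Finset.card_insert_of_notMem (by simp [ef01, ef0rr]),
        Finset.card_insert_of_notMem (by simp [ef1rr]),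
        Finset.card_singleton]
    have h5 : (5 : ℕ) ≤ S.ncard := by
      rw [← hAcard, ← Set.ncard_coe_finset]
      exact Set.ncard_le_ncard hAsub (Set.toFinite S)
    omega
  · exact h2'
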